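/- The number of elements of the semigroup F with maximal index k ≥ 3 in normal form is 2·Φ_{k-2}·2^{k-1}, where the normal forms with maximal index k are the words f₁^{α₁} f₃^{α₃}⋯f_{k-2}^{α_{k-2}} f_k f_{k-1}^{β_{k-1}}⋯f₂^{β₂}f₁^{β₁} with α₁, β_j ∈ {0,1} and α_i ∈ {0,1} satisfying α_i α_{i+1} = 0 for 3 ≤ i ≤ k-3. Equivalently: the number of binary sequences (α₃,…,α_{k-2}) with no two consecutive 1's is Φ_{k-2}. -/

import Mathlib

/-- Binary sequences `(α₃, …, α_{k-2})` (encoded as `v : Fin (k-4) → Bool`,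
`v j = α_{3+j}`) with no two consecutive `1`'s, i.e. `α_i α_{i+1} = 0` for
`3 ≤ i ≤ k-3`. -/
def NoTwoOnes (m : ℕ) : Type :=
  {v : Fin m → Bool // ∀ i : Fin m, ∀ h : (i : ℕ) + 1 < m,
    ¬(v i = true ∧ v ⟨(i : ℕ) + 1, h⟩ = true)}

noncomputable instance (m : ℕ) : Fintype (NoTwoOnes m) := by
  unfold NoTwoOnes
  classical
  infer_instance

/-- The normal forms with maximal index `k ≥ 3` are the words
`f₁^{α₁} f₃^{α₃} ⋯ f_{k-2}^{α_{k-2}} f_k f_{k-1}^{β_{k-1}} ⋯ f₂^{β₂} f₁^{β₁}`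
with `α₁, β_j ∈ {0,1}` and `α_i α_{i+1} = 0`; their number is
`2 · Φ_{k-2} · 2^{k-1}`.  Equivalently, the number of binary sequences
`(α₃, …, α_{k-2})` with no two consecutive `1`'s is `Φ_{k-2}`. -/
def nttEquiv (m : ℕ) : NoTwoOnes (m + 2) ≃ NoTwoOnes (m + 1) ⊕ NoTwoOnes m where
  toFun x :=
    if hb : x.1 0 = true then
      Sum.inr ⟨fun i => x.1 ⟨(i : ℕ) + 2, by omega⟩, by
        intro i h
        have := x.2 ⟨(i : ℕ) + 2, by omega⟩ (by simpa using by omega)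
        simpa using this⟩
    else
      Sum.inl ⟨fun i => x.1 i.succ, by
        intro i h
        have := x.2 i.succ (by simp; omega)
        simpa using this⟩
  invFun y :=
    match y with
    | Sum.inl w => ⟨Fin.cons false w.1, by
        intro i h
        induction i using Fin.cases with
        | zero => simp
        | succ j =>
          have : (⟨(j.succ : ℕ) + 1, h⟩ : Fin (m + 2)) = Fin.succ ⟨(j : ℕ) + 1, by simpa using h⟩ := rfl
          rw [this, Fin.cons_succ, Fin.cons_succ]
          exact w.2 j (by simpa using h)⟩
    | Sum.inr w => ⟨Fin.cons true (Fin.cons false w.1), by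
        intro i h
        induction i using Fin.cases with
        | zero => simp
        | succ j =>
          have e1 : (⟨(j.succ : ℕ) + 1, h⟩ : Fin (m + 2)) = Fin.succ ⟨(j : ℕ) + 1, by simpa using h⟩ := rfl
          rw [e1, Fin.cons_succ, Fin.cons_succ]
          induction j using Fin.cases with
          | zero => simp
          | succ l =>
            have e2 : (⟨(l.succ : ℕ) + 1, by simpa using h⟩ : Fin (m + 1)) = Fin.succ ⟨(l : ℕ) + 1, by simpa using h⟩ := rfl
            rw [e2, Fin.cons_succ, Fin.cons_succ]
            exact w.2 l (by simpa using h)⟩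
  left_inv x := by
    dsimp only
    by_cases hb : x.1 0 = true
    · rw [dif_pos hb]
      apply Subtype.ext
      dsimp only
      funext i
      induction i using Fin.cases with
      | zero => rw [Fin.cons_zero, hb]
      | succ j =>
        rw [Fin.cons_succ]
        induction j using Fin.cases with
        | zero =>
          rw [Fin.cons_zero]
          have := x.2 0 (by simp)
          simp only [hb, true_and, not_and] at this
          have h1 : x.1 ⟨0 + 1, by omega⟩ = false := by
            cases hcc : x.1 ⟨0 + 1, by omega⟩
            · rfl
            · exact absurd hcc (by simpa using this)
          have e0 : Fin.succ (0 : Fin (m + 1)) = (⟨0 + 1, by omega⟩ : Fin (m + 2)) := rfl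
          rw [e0, h1]
        | succ l =>
          rw [Fin.cons_succ]
          rfl
    · rw [dif_neg hb]
      apply Subtype.ext
      dsimp only
      funext i
      induction i using Fin.cases with
      | zero =>
        rw [Fin.cons_zero]
        exact (Bool.not_eq_true _ |>.mp hb).symm
      | succ j => rw [Fin.cons_succ]
  right_inv y := by
    rcases y with w | w
    · dsimp only
      simp only [Fin.cons_zero]
      rw [dif_neg (by decide : ¬(false = true))]
      congr 1
    · dsimp only
      simp only [Fin.cons_zero]
      rw [dif_pos trivial]
      congr 1

lemma card0 : Fintype.card (NoTwoOnes 0) = 1 := by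
  rw [Fintype.card_eq_one_iff]
  refine ⟨⟨fun i => i.elim0, fun i => i.elim0⟩, ?_⟩
  intro y
  apply Subtype.ext
  funext i
  exact i.elim0

lemma card1 : Fintype.card (NoTwoOnes 1) = 2 := by
  have e : NoTwoOnes 1 ≃ Bool :=
    { toFun := fun x => x.1 0
      invFun := fun b => ⟨fun _ => b, fun i h => by omega⟩
      left_inv := fun x => by
        apply Subtype.ext; funext i
        have : i = 0 := Subsingleton.elim _ _
        rw [this]
      right_inv := fun b => rfl }
  rw [Fintype.card_congr e, Fintype.card_bool]

lemma cardNTO (m : ℕ) : Fintype.card (NoTwoOnes m) = Nat.fib (m + 2) := by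
  induction m using Nat.strong_induction_on with
  | _ m ih =>
    match m with
    | 0 => simpa using card0
    | 1 => rw [card1]; decide
    | (n + 2) =>
      rw [Fintype.card_congr (nttEquiv n), Fintype.card_sum,
        ih (n + 1) (by omega), ih n (by omega)]
      have h1 : Nat.fib (n + 2 + 2) = Nat.fib (n + 2) + Nat.fib (n + 1 + 2) := by
        rw [Nat.fib_add_two]
      rw [h1]
      omega

theorem count_normal_forms (k : ℕ) (hk : 3 ≤ k) :
    Fintype.card (Bool × NoTwoOnes (k - 4) × (Fin (k - 1) → Bool)) =
      2 * Nat.fib (k - 2) * 2 ^ (k - 1) ∧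
    Fintype.card (NoTwoOnes (k - 4)) = Nat.fib (k - 2) := by
  have h2 : Fintype.card (NoTwoOnes (k - 4)) = Nat.fib (k - 2) := by
    rcases Nat.lt_or_ge k 4 with h | h
    · interval_cases k
      rw [cardNTO]
      decide
    · rw [cardNTO]
      congr 1
      omega
  refine ⟨?_, h2⟩
  rw [Fintype.card_prod, Fintype.card_prod, h2, Fintype.card_bool,
    Fintype.card_fun, Fintype.card_bool, Fintype.card_fin]
  ring
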